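/- Let 𝕜 be an RCLike field (ℝ or ℂ), let t be a quantum-logic term in n variables, and suppose there is a finite-dimensional inner product space E over 𝕜 and an assignment X : Fin n → Submodule 𝕜 E with eval t X ≠ ⊥. Then there exists an assignment Y : Fin n → Submodule 𝕜 (EuclideanSpace 𝕜 (Fin (n * size t))) with eval t Y ≠ ⊥, where size t is the number of variable occurrences in t. -/

import Mathlib

/-- A quantum-logic term in `n` variables. -/
inductive Term (n : ℕ) : Type
  | var : Fin n → Term n
  | neg : Term n → Term n
  | inf : Term n → Term n → Term n
  | sup : Term n → Term n → Term n

/-- The value of a quantum-logic term under an assignment of subspaces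
to the variables.  Negation is interpreted as orthogonal complement. -/
def Term.eval {n : ℕ} {𝕜 E : Type*} [RCLike 𝕜] [NormedAddCommGroup E]
    [InnerProductSpace 𝕜 E] : Term n → (Fin n → Submodule 𝕜 E) → Submodule 𝕜 E
  | .var i, U => U i
  | .neg t, U => (t.eval U)ᗮ
  | .inf s t, U => s.eval U ⊓ t.eval U
  | .sup s t, U => s.eval U ⊔ t.eval U

/-- The number of variable occurrences of a term. -/
def Term.size {n : ℕ} : Term n → ℕ
  | .var _ => 1
  | .neg t => t.size
  | .inf s t => s.size + t.size
  | .sup s t => s.size + t.size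

section Aux

open Submodule Module

local notation "⟪" x ", " y "⟫" => @inner _ _ _ x y

variable {n : ℕ} {𝕜 : Type*} [RCLike 𝕜]

/-- Negation normal form: `nnf t true` is equivalent to `t`,
`nnf t false` to `¬ t`. -/
def Term.nnf : Term n → Bool → Term n
  | .var i, true => .var i
  | .var i, false => .neg (.var i)
  | .neg s, b => s.nnf (!b)
  | .inf s t, true => .inf (s.nnf true) (t.nnf true)
  | .inf s t, false => .sup (s.nnf false) (t.nnf false)
  | .sup s t, true => .sup (s.nnf true) (t.nnf true)
  | .sup s t, false => .inf (s.nnf false) (t.nnf false)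

/-- Terms in negation normal form. -/
inductive Term.IsNNF : Term n → Prop
  | var (i : Fin n) : IsNNF (.var i)
  | negvar (i : Fin n) : IsNNF (.neg (.var i))
  | inf {s t : Term n} : IsNNF s → IsNNF t → IsNNF (.inf s t)
  | sup {s t : Term n} : IsNNF s → IsNNF t → IsNNF (.sup s t)

lemma Term.isNNF_nnf : ∀ (t : Term n) (b : Bool), (t.nnf b).IsNNF
  | .var _, true => .var _
  | .var _, false => .negvar _
  | .neg s, b => s.isNNF_nnf (!b)
  | .inf s t, true => .inf (s.isNNF_nnf true) (t.isNNF_nnf true)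
  | .inf s t, false => .sup (s.isNNF_nnf false) (t.isNNF_nnf false)
  | .sup s t, true => .sup (s.isNNF_nnf true) (t.isNNF_nnf true)
  | .sup s t, false => .inf (s.isNNF_nnf false) (t.isNNF_nnf false)

lemma Term.size_nnf : ∀ (t : Term n) (b : Bool), (t.nnf b).size = t.size := by
  intro t
  induction t with
  | var i => intro b; cases b <;> rfl
  | neg s ih => intro b; exact ih (!b)
  | inf s t ihs iht => intro b; cases b <;> simp [Term.nnf, Term.size, ihs, iht]
  | sup s t ihs iht => intro b; cases b <;> simp [Term.nnf, Term.size, ihs, iht]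

lemma Term.pos_of_term : Term n → 0 < n
  | .var i => i.pos
  | .neg s => s.pos_of_term
  | .inf s _ => s.pos_of_term
  | .sup s _ => s.pos_of_term

variable {E : Type*} [NormedAddCommGroup E] [InnerProductSpace 𝕜 E]

lemma orth_inf [FiniteDimensional 𝕜 E] (A B : Submodule 𝕜 E) :
    (A ⊓ B)ᗮ = Aᗮ ⊔ Bᗮ := by
  have h := Submodule.inf_orthogonal Aᗮ Bᗮ
  rw [A.orthogonal_orthogonal, B.orthogonal_orthogonal] at h
  rw [h, (Aᗮ ⊔ Bᗮ).orthogonal_orthogonal]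

lemma orth_sup (A B : Submodule 𝕜 E) : (A ⊔ B)ᗮ = Aᗮ ⊓ Bᗮ :=
  (Submodule.inf_orthogonal A B).symm

lemma Term.eval_nnf [FiniteDimensional 𝕜 E] (t : Term n) (X : Fin n → Submodule 𝕜 E) :
    ∀ b : Bool, (t.nnf b).eval X = cond b (t.eval X) (t.eval X)ᗮ := by
  induction t with
  | var i => intro b; cases b <;> rfl
  | neg s ih =>
    intro b
    cases b with
    | true =>
      have h : (Term.neg s).nnf true = s.nnf false := rfl
      rw [h, ih false]; rfl
    | false =>
      have h : (Term.neg s).nnf false = s.nnf true := rfl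
      rw [h, ih true]
      show s.eval X = ((s.eval X)ᗮ)ᗮ
      rw [(s.eval X).orthogonal_orthogonal]
  | inf s t ihs iht =>
    intro b
    cases b with
    | true => simp [Term.nnf, Term.eval, ihs true, iht true]
    | false => simp [Term.nnf, Term.eval, ihs false, iht false, orth_inf]
  | sup s t ihs iht =>
    intro b
    cases b with
    | true => simp [Term.nnf, Term.eval, ihs true, iht true]
    | false => simp [Term.nnf, Term.eval, ihs false, iht false, orth_sup]

/-- Evaluation where orthocomplements are taken relative to `W`. -/
def evalIn (W : Submodule 𝕜 E) : Term n → (Fin n → Submodule 𝕜 E) → Submodule 𝕜 E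
  | .var i, U => U i
  | .neg t, U => (evalIn W t U)ᗮ ⊓ W
  | .inf s t, U => evalIn W s U ⊓ evalIn W t U
  | .sup s t, U => evalIn W s U ⊔ evalIn W t U

lemma evalIn_le (W : Submodule 𝕜 E) {u : Term n} (hu : u.IsNNF)
    {Z : Fin n → Submodule 𝕜 E} (hZ : ∀ i, Z i ≤ W) : evalIn W u Z ≤ W := by
  induction hu with
  | var i => exact hZ i
  | negvar i => exact inf_le_right
  | inf h1 h2 ih1 ih2 => exact le_trans inf_le_left ih1
  | sup h1 h2 ih1 ih2 => exact sup_le ih1 ih2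

lemma core [FiniteDimensional 𝕜 E] {u : Term n} (hu : u.IsNNF)
    (X : Fin n → Submodule 𝕜 E) :
    ∀ x : E, x ∈ u.eval X →
    ∃ (Y : Fin n → Submodule 𝕜 E) (W : Submodule 𝕜 E),
      finrank 𝕜 W ≤ u.size ∧ (∀ i, Y i ≤ X i ⊓ W) ∧
      ∀ (Z : Fin n → Submodule 𝕜 E) (W' : Submodule 𝕜 E), W ≤ W' →
        (∀ i, Y i ≤ Z i) → (∀ i, Z i ≤ X i ⊓ W') → x ∈ evalIn W' u Z := by
  induction hu with
  | var i =>
    intro x hx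
    classical
    refine ⟨fun j => if j = i then span 𝕜 {x} else ⊥, span 𝕜 {x}, ?_, ?_, ?_⟩
    · rcases eq_or_ne x 0 with h | h
      · subst h
        rw [Submodule.span_zero_singleton]
        simp
      · simp [finrank_span_singleton h, Term.size]
    · intro j
      by_cases hj : j = i
      · subst hj
        simp only [if_pos rfl, le_inf_iff]
        exact ⟨(span_singleton_le_iff_mem _ _).2 hx, le_rfl⟩
      · simp [hj]
    · intro Z W' hWW' hYZ hZX
      have : x ∈ Z i := (by simpa using hYZ i : span 𝕜 {x} ≤ Z i) (mem_span_singleton_self x)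
      exact this
  | negvar i =>
    intro x hx
    refine ⟨fun _ => ⊥, span 𝕜 {x}, ?_, fun _ => bot_le, ?_⟩
    · rcases eq_or_ne x 0 with h | h
      · subst h
        rw [Submodule.span_zero_singleton]
        simp
      · simp [finrank_span_singleton h, Term.size]
    · intro Z W' hWW' hYZ hZX
      have hx' : x ∈ (X i)ᗮ := hx
      have h1 : x ∈ (Z i)ᗮ := by
        rw [Submodule.mem_orthogonal]
        intro v hv
        exact (Submodule.mem_orthogonal _ _).1 hx' v (((hZX i).trans inf_le_left) hv)
      exact Submodule.mem_inf.2 ⟨h1, hWW' (mem_span_singleton_self x)⟩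
  | @inf s t hs ht ihs iht =>
    intro x hx
    obtain ⟨hxs, hxt⟩ : x ∈ s.eval X ∧ x ∈ t.eval X := hx
    obtain ⟨Y1, W1, hr1, hc1, hcon1⟩ := ihs x hxs
    obtain ⟨Y2, W2, hr2, hc2, hcon2⟩ := iht x hxt
    refine ⟨fun i => Y1 i ⊔ Y2 i, W1 ⊔ W2, ?_, ?_, ?_⟩
    · calc finrank 𝕜 ↥(W1 ⊔ W2) ≤ finrank 𝕜 ↥(W1 ⊔ W2) + finrank 𝕜 ↥(W1 ⊓ W2) :=
            Nat.le_add_right _ _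
        _ = finrank 𝕜 W1 + finrank 𝕜 W2 := Submodule.finrank_sup_add_finrank_inf_eq W1 W2
        _ ≤ s.size + t.size := Nat.add_le_add hr1 hr2
    · intro i
      exact sup_le ((hc1 i).trans (inf_le_inf_left _ le_sup_left))
        ((hc2 i).trans (inf_le_inf_left _ le_sup_right))
    · intro Z W' hWW' hYZ hZX
      exact ⟨hcon1 Z W' (le_sup_left.trans hWW')
          (fun i => le_sup_left.trans (hYZ i)) hZX,
        hcon2 Z W' (le_sup_right.trans hWW')
          (fun i => le_sup_right.trans (hYZ i)) hZX⟩
  | @sup s t hs ht ihs iht =>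
    intro x hx
    obtain ⟨a, ha, b, hb, hab⟩ := Submodule.mem_sup.1 (hx : x ∈ s.eval X ⊔ t.eval X)
    obtain ⟨Y1, W1, hr1, hc1, hcon1⟩ := ihs a ha
    obtain ⟨Y2, W2, hr2, hc2, hcon2⟩ := iht b hb
    refine ⟨fun i => Y1 i ⊔ Y2 i, W1 ⊔ W2, ?_, ?_, ?_⟩
    · calc finrank 𝕜 ↥(W1 ⊔ W2) ≤ finrank 𝕜 ↥(W1 ⊔ W2) + finrank 𝕜 ↥(W1 ⊓ W2) :=
            Nat.le_add_right _ _
        _ = finrank 𝕜 W1 + finrank 𝕜 W2 := Submodule.finrank_sup_add_finrank_inf_eq W1 W2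
        _ ≤ s.size + t.size := Nat.add_le_add hr1 hr2
    · intro i
      exact sup_le ((hc1 i).trans (inf_le_inf_left _ le_sup_left))
        ((hc2 i).trans (inf_le_inf_left _ le_sup_right))
    · intro Z W' hWW' hYZ hZX
      exact Submodule.mem_sup.2
        ⟨a, hcon1 Z W' (le_sup_left.trans hWW')
            (fun i => le_sup_left.trans (hYZ i)) hZX,
         b, hcon2 Z W' (le_sup_right.trans hWW')
            (fun i => le_sup_right.trans (hYZ i)) hZX, hab⟩

lemma transfer {F : Type*} [NormedAddCommGroup F] [InnerProductSpace 𝕜 F]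
    {u : Term n} (hu : u.IsNNF) (W : Submodule 𝕜 E) (g : W →ₗᵢ[𝕜] F)
    (Z : Fin n → Submodule 𝕜 E) (hZ : ∀ i, Z i ≤ W) :
    ∀ (x : E) (hxW : x ∈ W), x ∈ evalIn W u Z →
      g ⟨x, hxW⟩ ∈ u.eval (fun i => ((Z i).comap W.subtype).map g.toLinearMap) := by
  induction hu with
  | var i =>
    intro x hxW hx
    exact Submodule.mem_map.2 ⟨⟨x, hxW⟩, hx, rfl⟩
  | negvar i =>
    intro x hxW hx
    obtain ⟨hx1, _⟩ : x ∈ (Z i)ᗮ ∧ x ∈ W := hx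
    show g ⟨x, hxW⟩ ∈ (((Z i).comap W.subtype).map g.toLinearMap)ᗮ
    rw [Submodule.mem_orthogonal]
    rintro v hv
    obtain ⟨z, hz, rfl⟩ := Submodule.mem_map.1 hv
    have h2 := g.inner_map_map z ⟨x, hxW⟩
    rw [Submodule.coe_inner] at h2
    exact h2.trans ((Submodule.mem_orthogonal _ _).1 hx1 (z : E) hz)
  | @inf s t hs ht ihs iht =>
    intro x hxW hx
    exact ⟨ihs x hxW hx.1, iht x hxW hx.2⟩
  | @sup s t hs ht ihs iht =>
    intro x hxW hx
    obtain ⟨a, ha, b, hb, hab⟩ := Submodule.mem_sup.1 (hx : x ∈ evalIn W s Z ⊔ evalIn W t Z)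
    have haW : a ∈ W := evalIn_le W hs hZ ha
    have hbW : b ∈ W := evalIn_le W ht hZ hb
    have hsplit : (⟨x, hxW⟩ : W) = ⟨a, haW⟩ + ⟨b, hbW⟩ := Subtype.ext (by simp [← hab])
    rw [hsplit, map_add]
    exact Submodule.mem_sup.2 ⟨_, ihs a haW ha, _, iht b hbW hb, rfl⟩

/-- Extension of Euclidean spaces by zero coordinates, as a linear isometry. -/
noncomputable def extendIso (m N : ℕ) (h : m ≤ N) :
    EuclideanSpace 𝕜 (Fin m) →ₗᵢ[𝕜] EuclideanSpace 𝕜 (Fin N) where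
  toLinearMap :=
    { toFun := fun x => WithLp.toLp 2 (fun j => if hj : (j : ℕ) < m then x ⟨j, hj⟩ else 0)
      map_add' := by
        intro x y; ext j
        by_cases hj : (j : ℕ) < m <;> simp [hj, PiLp.add_apply]
      map_smul' := by
        intro c x; ext j
        by_cases hj : (j : ℕ) < m <;> simp [hj, PiLp.smul_apply] }
  norm_map' := by
    intro x
    rw [EuclideanSpace.norm_eq, EuclideanSpace.norm_eq]
    congr 1
    simp only [PiLp.toLp_apply]
    have key : ∀ j : Fin N,
        ‖(if hj : (j : ℕ) < m then x ⟨j, hj⟩ else 0)‖ ^ 2 =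
          (fun j : ℕ => if hj : j < m then ‖x ⟨j, hj⟩‖ ^ 2 else 0) (j : ℕ) := by
      intro j
      by_cases hj : (j : ℕ) < m <;> simp [hj]
    calc ∑ j : Fin N, ‖(if hj : (j : ℕ) < m then x ⟨j, hj⟩ else 0)‖ ^ 2
        = ∑ j : Fin N, (fun j : ℕ => if hj : j < m then ‖x ⟨j, hj⟩‖ ^ 2 else 0) (j : ℕ) :=
          Finset.sum_congr rfl fun j _ => key j
      _ = ∑ j ∈ Finset.range N, (fun j : ℕ => if hj : j < m then ‖x ⟨j, hj⟩‖ ^ 2 else 0) j :=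
          Fin.sum_univ_eq_sum_range (fun j : ℕ => if hj : j < m then ‖x ⟨j, hj⟩‖ ^ 2 else 0) N
      _ = ∑ j ∈ Finset.range m, (fun j : ℕ => if hj : j < m then ‖x ⟨j, hj⟩‖ ^ 2 else 0) j :=
          (Finset.sum_subset (Finset.range_subset_range.2 h)
            (fun j _ hj => dif_neg (by simpa using hj))).symm
      _ = ∑ j ∈ Finset.range m, (fun j : ℕ => if hj : j < m then ‖x ⟨j, hj⟩‖ ^ 2 else 0) j := rfl
      _ = ∑ i : Fin m, (fun j : ℕ => if hj : j < m then ‖x ⟨j, hj⟩‖ ^ 2 else 0) (i : ℕ) :=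
          (Fin.sum_univ_eq_sum_range (fun j : ℕ => if hj : j < m then ‖x ⟨j, hj⟩‖ ^ 2 else 0) m).symm
      _ = ∑ i : Fin m, ‖x i‖ ^ 2 := Finset.sum_congr rfl (by
          intro i _
          exact dif_pos i.2)

end Aux

theorem weakly_satisfiable_in_small_dimension {n : ℕ} {𝕜 : Type*} [RCLike 𝕜]
    (t : Term n) {E : Type*} [NormedAddCommGroup E] [InnerProductSpace 𝕜 E]
    [FiniteDimensional 𝕜 E]
    (X : Fin n → Submodule 𝕜 E) (hX : t.eval X ≠ ⊥) :
    ∃ Y : Fin n → Submodule 𝕜 (EuclideanSpace 𝕜 (Fin (n * t.size))),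
      t.eval Y ≠ ⊥ := by
  classical
  obtain ⟨x, hx, hx0⟩ := (Submodule.ne_bot_iff _).1 hX
  have hnn := t.isNNF_nnf true
  have hxu : x ∈ (t.nnf true).eval X := by rw [t.eval_nnf X true]; exact hx
  obtain ⟨Y, W, hWrank, hYXW, hcon⟩ := core hnn X x hxu
  have hYW : ∀ i, Y i ≤ W := fun i => (hYXW i).trans inf_le_right
  have hxe : x ∈ evalIn W (t.nnf true) Y := hcon Y W le_rfl (fun i => le_rfl) hYXW
  have hxW : x ∈ W := evalIn_le W hnn hYW hxe
  have hle : Module.finrank 𝕜 ↥W ≤ n * t.size := by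
    calc Module.finrank 𝕜 ↥W ≤ (t.nnf true).size := hWrank
      _ = t.size := t.size_nnf true
      _ ≤ n * t.size := Nat.le_mul_of_pos_left _ t.pos_of_term
  let g : ↥W →ₗᵢ[𝕜] EuclideanSpace 𝕜 (Fin (n * t.size)) :=
    (extendIso _ _ hle).comp (stdOrthonormalBasis 𝕜 ↥W).repr.toLinearIsometry
  refine ⟨fun i => ((Y i).comap W.subtype).map g.toLinearMap, ?_⟩
  have hmem := transfer hnn W g Y hYW x hxW hxe
  rw [t.eval_nnf (fun i => ((Y i).comap W.subtype).map g.toLinearMap) true] at hmem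
  intro hbot
  rw [hbot] at hmem
  have hz : (⟨x, hxW⟩ : W) = 0 := g.injective (by simpa using hmem)
  exact hx0 (by simpa using congrArg Subtype.val hz)
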